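/- Let k ≥ 1 and let C be a directed cycle of length p in the de Bruijn graph G_k, and let ν_C be the shift-invariant measure on {0,1}^ℤ giving weight 1/p to each of the p translates of the p-periodic configuration obtained by tracing C. Then for L ≥ k+1, the measure π_k ν_C on {0,1}^{k+1} extends to a translation-invariant probability measure on {0,1}^{ℤ_L} (the ring with L sites) if and only if p divides L. -/

import Mathlib

/-- Local translation invariance for a measure on `{0,1}^{k+1}`. -/
def IsLTI (k : ℕ) (μ : (Fin (k + 1) → Bool) → ℝ) : Prop :=
  ∀ η : Fin k → Bool, (∑ σ : Bool, μ (Fin.snoc η σ)) = ∑ σ : Bool, μ (Fin.cons σ η)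

/-- A directed cycle in the de Bruijn graph `G_k`: a cyclic sequence of pairwise
distinct vertices `v_0, ..., v_{p-1}` in `{0,1}^k` (cyclic successor given by
`finRotate`) such that consecutive vertices overlap as required for a directed
edge `aθb : aθ → θb` of `G_k` to join them (loops, `p = 1`, are allowed). -/
def IsCycle (k p : ℕ) (v : Fin p → (Fin k → Bool)) : Prop :=
  0 < p ∧ Function.Injective v ∧
    ∀ i : Fin p, ∀ j : ℕ, ∀ h : j + 1 < k,
      v i ⟨j + 1, h⟩ = v (finRotate p i) ⟨j, by omega⟩

/-- The measure `π_k ν_C` on `{0,1}^{k+1}` (the edge set of `G_k`) associated to a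
cycle `C` given by vertices `v` : it gives weight `1/|C|` to each edge of `C` and
`0` to all other edges.  The edge from `v_i` to `v_{i+1}` is the string
`Fin.cons (v_i)_0 (v_{i+1})`. -/
noncomputable def cycleMeasure (k p : ℕ) (hk : 0 < k) (v : Fin p → (Fin k → Bool)) :
    (Fin (k + 1) → Bool) → ℝ := fun η =>
  (p : ℝ)⁻¹ * ∑ i : Fin p,
    if η = Fin.cons (v i ⟨0, hk⟩) (v (finRotate p i)) then 1 else 0

/-- `μ` (a measure on `{0,1}^{k+1}`) extends to a translation-invariant probability
measure on configurations on the ring `ℤ_L` with `L` sites: the cyclic translation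
is `finRotate L`, and the marginal on any `k+1` cyclically consecutive sites equals
`μ`. -/
def ExtendsToRing (k L : ℕ) (μ : (Fin (k + 1) → Bool) → ℝ) : Prop :=
  ∃ ν : (Fin L → Bool) → ℝ, (∀ x, 0 ≤ ν x) ∧ (∑ x, ν x) = 1 ∧
    (∀ x, ν (x ∘ finRotate L) = ν x) ∧
    ∀ a : Fin L, ∀ ζ : Fin (k + 1) → Bool,
      (∑ x : Fin L → Bool,
        if (∀ t : Fin (k + 1), x ((finRotate L)^[t] a) = ζ t) then ν x else 0) = μ ζ

open Fin.NatCast Fin.CommRing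

def edgeOf {k p : ℕ} (hk : 0 < k) (v : Fin p → (Fin k → Bool)) (i : Fin p) :
    Fin (k+1) → Bool := Fin.cons (v i ⟨0, hk⟩) (v (finRotate p i))

lemma aux_rot_iter (n : ℕ) (a : Fin (n+1)) (t : ℕ) :
    (finRotate (n+1))^[t] a = a + (t : Fin (n+1)) := by
  induction t with
  | zero => simp
  | succ t ih => rw [Function.iterate_succ_apply', ih, finRotate_succ_apply]; push_cast; ring

lemma aux_natCast_mod {p L : ℕ} [NeZero p] (hdvd : p ∣ L) (n : ℕ) :
    ((n % L : ℕ) : Fin p) = (n : Fin p) := by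
  apply Fin.ext
  rw [Fin.val_natCast, Fin.val_natCast, Nat.mod_mod_of_dvd _ hdvd]

lemma aux_count (m n : ℕ) [NeZero n] (g : Fin n → ℝ) :
    ∑ s : Fin (m * n), g ((s.val : ℕ) : Fin n) = m * ∑ i, g i := by
  rw [← Fintype.sum_equiv (finProdFinEquiv : Fin m × Fin n ≃ Fin (m*n))
    (fun q : Fin m × Fin n => g q.2) (fun s => g ((s.val : ℕ) : Fin n)) ?_]
  · rw [Fintype.sum_prod_type]
    simp [Finset.sum_const, Finset.card_univ]
  · intro q
    show g q.2 = g (((finProdFinEquiv q).val : ℕ) : Fin n)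
    congr 1
    apply Fin.ext
    rw [Fin.val_natCast]
    show q.2.val = (q.2.val + n * q.1.val) % n
    rw [Nat.add_mul_mod_self_left, Nat.mod_eq_of_lt q.2.isLt]

lemma aux_comp_eq {α β γ : Type*} (e : α ≃ β) (x : β → γ) (w : α → γ) :
    x ∘ e = w ↔ x = w ∘ e.symm := by
  constructor
  · rintro rfl; funext b; simp
  · rintro rfl; funext a; simp

lemma aux_vtx {k p : ℕ} (hk : 0 < k) (v : Fin (p+1) → (Fin k → Bool))
    (hcyc : ∀ i : Fin (p+1), ∀ j : ℕ, ∀ h : j + 1 < k,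
      v i ⟨j + 1, h⟩ = v (finRotate (p+1) i) ⟨j, by omega⟩) :
    ∀ (j : ℕ) (h : j < k) (i : Fin (p+1)),
      v i ⟨j, h⟩ = v ((finRotate (p+1))^[j] i) ⟨0, hk⟩ := by
  intro j
  induction j with
  | zero => intro h i; rfl
  | succ j ih =>
    intro h i
    rw [hcyc i j h, ih (by omega), ← Function.iterate_succ_apply]

lemma aux_window {k p : ℕ} (hk : 0 < k) (v : Fin (p+1) → (Fin k → Bool))
    (hcyc : ∀ i : Fin (p+1), ∀ j : ℕ, ∀ h : j + 1 < k,
      v i ⟨j + 1, h⟩ = v (finRotate (p+1) i) ⟨j, by omega⟩) (n : ℕ) :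
    (fun t : Fin (k+1) => v (((n + t.val : ℕ) : Fin (p+1))) ⟨0, hk⟩)
      = edgeOf hk v (n : Fin (p+1)) := by
  funext t
  simp only [edgeOf]
  rcases t with ⟨jt, hjt⟩
  match jt, hjt with
  | 0, _ => rfl
  | (j+1), h =>
    have e1 : (⟨j+1, h⟩ : Fin (k+1)) = Fin.succ ⟨j, by omega⟩ := rfl
    rw [e1, Fin.cons_succ, aux_vtx hk v hcyc j (by omega),
      ← Function.iterate_succ_apply, aux_rot_iter]
    congr 1
    simp only [Fin.val_succ]
    push_cast
    ring

theorem stmt14' (k q M : ℕ) (hk : 0 < k) (hL : k + 1 ≤ M + 1)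
    (v : Fin (q+1) → (Fin k → Bool)) (hinj : Function.Injective v)
    (hcyc : ∀ i : Fin (q+1), ∀ j : ℕ, ∀ h : j + 1 < k,
      v i ⟨j + 1, h⟩ = v (finRotate (q+1) i) ⟨j, by omega⟩) :
    ExtendsToRing k (M+1) (cycleMeasure k (q+1) hk v) ↔ (q+1) ∣ (M+1) := by
  constructor
  · rintro ⟨ν, hpos, hsum, hinv, hmarg⟩
    obtain ⟨x, -, hx⟩ := Finset.exists_ne_zero_of_sum_ne_zero
      (by rw [hsum]; norm_num : (∑ x : Fin (M+1) → Bool, ν x) ≠ 0)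
    have hxpos : 0 < ν x := (hpos x).lt_of_ne (Ne.symm hx)
    set W : Fin (M+1) → Fin (k+1) → Bool :=
      fun a t => x ((finRotate (M+1))^[(t : ℕ)] a) with hW
    have hsupp : ∀ a : Fin (M+1), ∃ i : Fin (q+1), W a = edgeOf hk v i := by
      intro a
      have h1 : 0 < cycleMeasure k (q+1) hk v (W a) := by
        rw [← hmarg a (W a)]
        refine lt_of_lt_of_le hxpos ?_
        have hterm : ν x = if (∀ t : Fin (k+1), x ((finRotate (M+1))^[(t:ℕ)] a) = W a t)
            then ν x else 0 := (if_pos (fun t => rfl)).symm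
        rw [hterm]
        refine Finset.single_le_sum
          (f := fun y => if (∀ t : Fin (k+1), y ((finRotate (M+1))^[(t:ℕ)] a) = W a t)
            then ν y else 0) (fun y _ => ?_) (Finset.mem_univ x)
        split
        · exact hpos y
        · exact le_rfl
      simp only [cycleMeasure] at h1
      have hS : (∑ i : Fin (q+1),
          if W a = Fin.cons (v i ⟨0, hk⟩) (v (finRotate (q+1) i)) then (1:ℝ) else 0) ≠ 0 := by
        intro h0
        rw [h0, mul_zero] at h1
        exact lt_irrefl 0 h1
      obtain ⟨i, -, hi⟩ := Finset.exists_ne_zero_of_sum_ne_zero hS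
      refine ⟨i, ?_⟩
      by_contra hc
      simp only [edgeOf] at hc
      rw [if_neg hc] at hi
      exact hi rfl
    choose f hf using hsupp
    have hvf : ∀ (a : Fin (M+1)) (s : Fin k),
        v (f a) s = x ((finRotate (M+1))^[(s:ℕ)] a) := by
      intro a s
      rcases s with ⟨js, hjs⟩
      match js, hjs with
      | 0, h0 =>
        have h2 := congrFun (hf a) 0
        simp only [edgeOf, Fin.cons_zero] at h2
        exact h2.symm
      | (j+1), h =>
        rw [hcyc (f a) j h]
        have h2 := congrFun (hf a) ⟨j+1, by omega⟩
        have e1 : (⟨j+1, by omega⟩ : Fin (k+1)) = Fin.succ ⟨j, by omega⟩ := rfl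
        simp only [edgeOf, e1, Fin.cons_succ] at h2
        exact h2.symm
    have hstep : ∀ a : Fin (M+1), f (finRotate (M+1) a) = finRotate (q+1) (f a) := by
      intro a
      apply hinj
      funext s
      rw [hvf (finRotate (M+1) a) s, ← Function.iterate_succ_apply]
      have h2 := congrFun (hf a) (Fin.succ s)
      simp only [edgeOf, Fin.cons_succ] at h2
      exact h2
    have hiter : ∀ (t : ℕ) (a : Fin (M+1)),
        f ((finRotate (M+1))^[t] a) = (finRotate (q+1))^[t] (f a) := by
      intro t a
      induction t with
      | zero => rfl
      | succ t ih =>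
        rw [Function.iterate_succ_apply', Function.iterate_succ_apply', hstep, ih]
    have hfin := hiter (M+1) 0
    have e0 : (finRotate (M+1))^[M+1] (0 : Fin (M+1)) = 0 := by
      rw [aux_rot_iter, Fin.natCast_self, add_zero]
    rw [e0, aux_rot_iter] at hfin
    exact Fin.natCast_eq_zero.mp (left_eq_add.mp hfin)
  · rintro ⟨m, hm⟩
    have hm0 : 0 < m := Nat.pos_of_ne_zero (by rintro rfl; simp at hm)
    set y : Fin (M+1) → Bool := fun j => v ((j.val : ℕ) : Fin (q+1)) ⟨0, hk⟩ with hy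
    set z : Fin (M+1) → (Fin (M+1) → Bool) := fun s j => y (j + s) with hz
    refine ⟨fun x => ((M+1 : ℕ) : ℝ)⁻¹ * ∑ s : Fin (M+1), if x = z s then 1 else 0,
      ?_, ?_, ?_, ?_⟩
    · intro x
      refine mul_nonneg (by positivity) (Finset.sum_nonneg fun s _ => ?_)
      split
      · norm_num
      · exact le_rfl
    · rw [← Finset.mul_sum, Finset.sum_comm]
      have : ∀ s : Fin (M+1), (∑ x : Fin (M+1) → Bool, if x = z s then (1:ℝ) else 0) = 1 := by
        intro s
        rw [Finset.sum_ite_eq' Finset.univ (z s) (fun _ => (1:ℝ))]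
        simp
      rw [Finset.sum_congr rfl (fun s _ => this s)]
      simp only [Finset.sum_const, Finset.card_univ, Fintype.card_fun, nsmul_eq_mul, mul_one,
        Fintype.card_fin]
      exact inv_mul_cancel₀ (by positivity)
    · intro x
      have hzrot : ∀ s : Fin (M+1), z s ∘ (finRotate (M+1)) = z (s + 1) := by
        intro s
        funext j
        show y ((finRotate (M+1) j) + s) = y (j + (s + 1))
        rw [finRotate_succ_apply]
        congr 1
        ring
      have key : ∀ s : Fin (M+1), (x ∘ (finRotate (M+1)) = z s) ↔ (x = z (s - 1)) := by
        intro s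
        rw [aux_comp_eq (finRotate (M+1)) x (z s)]
        have h3 : z s ∘ ⇑(finRotate (M+1)).symm = z (s - 1) := by
          have h4 := hzrot (s - 1)
          rw [sub_add_cancel] at h4
          rw [← h4]
          funext j
          simp
        rw [h3]
      have h5 : (∑ s : Fin (M+1), if x ∘ (finRotate (M+1)) = z s then (1:ℝ) else 0)
          = ∑ s : Fin (M+1), if x = z s then (1:ℝ) else 0 := by
        refine Fintype.sum_equiv (Equiv.subRight (1 : Fin (M+1))) _ _ (fun s => ?_)
        exact if_congr (key s) rfl rfl
      show ((M+1 : ℕ) : ℝ)⁻¹ * (∑ s : Fin (M+1), if x ∘ (finRotate (M+1)) = z s then (1:ℝ) else 0)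
        = ((M+1 : ℕ) : ℝ)⁻¹ * ∑ s : Fin (M+1), if x = z s then (1:ℝ) else 0
      rw [h5]
    · intro a ζ
      have hdvd : (q+1) ∣ (M+1) := ⟨m, hm⟩
      -- rewrite each summand
      have step1 : ∀ x : Fin (M+1) → Bool,
          (if (∀ t : Fin (k+1), x ((finRotate (M+1))^[(t:ℕ)] a) = ζ t)
            then ((M+1 : ℕ) : ℝ)⁻¹ * ∑ s : Fin (M+1), if x = z s then 1 else 0 else 0)
          = ((M+1 : ℕ) : ℝ)⁻¹ * ∑ s : Fin (M+1),
              if x = z s then (if (∀ t : Fin (k+1), x ((finRotate (M+1))^[(t:ℕ)] a) = ζ t)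
                then (1:ℝ) else 0) else 0 := by
        intro x
        by_cases hcond : (∀ t : Fin (k+1), x ((finRotate (M+1))^[(t:ℕ)] a) = ζ t)
        · rw [if_pos hcond]
          congr 1
          refine Finset.sum_congr rfl (fun s _ => ?_)
          rw [if_pos hcond]
        · rw [if_neg hcond]
          symm
          rw [mul_eq_zero]
          right
          refine Finset.sum_eq_zero (fun s _ => ?_)
          rw [if_neg hcond, ite_self]
      rw [Finset.sum_congr rfl (fun x _ => step1 x), ← Finset.mul_sum, Finset.sum_comm]
      have step2 : ∀ s : Fin (M+1),
          (∑ x : Fin (M+1) → Bool, if x = z s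
            then (if (∀ t : Fin (k+1), x ((finRotate (M+1))^[(t:ℕ)] a) = ζ t) then (1:ℝ) else 0)
            else 0)
          = if (∀ t : Fin (k+1), z s ((finRotate (M+1))^[(t:ℕ)] a) = ζ t) then (1:ℝ) else 0 := by
        intro s
        rw [Finset.sum_ite_eq' Finset.univ (z s)
          (fun x => if (∀ t : Fin (k+1), x ((finRotate (M+1))^[(t:ℕ)] a) = ζ t) then (1:ℝ) else 0)]
        simp
      rw [Finset.sum_congr rfl (fun s _ => step2 s)]
      -- identify the window of z s
      have step3 : ∀ s : Fin (M+1),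
          (∀ t : Fin (k+1), z s ((finRotate (M+1))^[(t:ℕ)] a) = ζ t)
          ↔ ζ = edgeOf hk v (((a + s).val : ℕ) : Fin (q+1)) := by
        intro s
        have hwin : ∀ t : Fin (k+1), z s ((finRotate (M+1))^[(t:ℕ)] a)
            = edgeOf hk v (((a + s).val : ℕ) : Fin (q+1)) t := by
          intro t
          rw [aux_rot_iter, ← aux_window hk v hcyc ((a + s).val)]
          show y ((a + (t.val : Fin (M+1))) + s) = v ((((a+s).val + t.val : ℕ) : Fin (q+1))) ⟨0, hk⟩
          rw [hy]
          show v ((((a + (t.val : Fin (M+1))) + s).val : ℕ) : Fin (q+1)) ⟨0, hk⟩ = _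
          congr 1
          have e2 : (a + (t.val : Fin (M+1))) + s = (a + s) + (t.val : Fin (M+1)) := by ring
          rw [e2]
          rw [Fin.add_def]
          rw [aux_natCast_mod hdvd]
          congr 1
          rw [Fin.val_natCast, Nat.mod_eq_of_lt (lt_of_lt_of_le t.isLt hL)]
        constructor
        · intro h
          funext t
          rw [← hwin t, h t]
        · intro h t
          rw [hwin t, h]
      rw [Finset.sum_congr rfl (fun s _ => if_congr (step3 s) rfl rfl)]
      -- reindex s ↦ a + s
      have step4 : (∑ s : Fin (M+1), if ζ = edgeOf hk v (((a + s).val : ℕ) : Fin (q+1))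
            then (1:ℝ) else 0)
          = ∑ u : Fin (M+1), if ζ = edgeOf hk v ((u.val : ℕ) : Fin (q+1)) then (1:ℝ) else 0 := by
        refine Fintype.sum_equiv (Equiv.addLeft a) _ _ (fun s => ?_)
        rfl
      rw [step4]
      -- counting
      have step5 : (∑ u : Fin (M+1), if ζ = edgeOf hk v ((u.val : ℕ) : Fin (q+1))
            then (1:ℝ) else 0)
          = m * ∑ i : Fin (q+1), if ζ = edgeOf hk v i then (1:ℝ) else 0 := by
        have hMm : M + 1 = m * (q+1) := by rw [hm, Nat.mul_comm]
        rw [← aux_count m (q+1) (fun i => if ζ = edgeOf hk v i then (1:ℝ) else 0)]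
        exact Fintype.sum_equiv (finCongr hMm) _ _ (fun u => rfl)
      rw [step5]
      simp only [cycleMeasure, edgeOf]
      rw [hm]
      push_cast
      have hq0 : ((q:ℝ)+1) ≠ 0 := by positivity
      have hm0' : (m:ℝ) ≠ 0 := by positivity
      field_simp
      congr

theorem stmt14 (k p L : ℕ) (hk : 0 < k) (hL : k + 1 ≤ L)
    (v : Fin p → (Fin k → Bool)) (hv : IsCycle k p v) :
    ExtendsToRing k L (cycleMeasure k p hk v) ↔ p ∣ L := by
  obtain ⟨hp, hinj, hcyc⟩ := hv
  obtain ⟨q, rfl⟩ : ∃ q, p = q + 1 := ⟨p - 1, by omega⟩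
  obtain ⟨M, rfl⟩ : ∃ M, L = M + 1 := ⟨L - 1, by omega⟩
  exact stmt14' k q M hk hL v hinj hcyc
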